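/- (Theorem 6.25, compactness criterion.) Assume in addition that K is proper (locally compact), as holds for ℚ_p and its quadratic extensions. A continuous K-linear operator T : H →L[K] H is a compact operator (Lean: IsCompactOperator T, i.e. some neighborhood of 0 has relatively compact image) if and only if the row suprema of its matrix tend to zero: Tendsto (fun m => ⨆ n : ℕ, ‖(T (e n)) m‖) atTop (nhds 0). -/

import Mathlib

open Filter

noncomputable section

variable (K : Type*) [NontriviallyNormedField K] [IsUltrametricDist K]
  [CompleteSpace K] [StarRing K] [NormedStarGroup K]

/-- The p-adic coordinate Hilbert space: zero-convergent sequences in `K` with sup norm. -/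
abbrev H := ZeroAtInftyContinuousMap ℕ K

/-- The standard basis vectors of `H K`. -/
def e (n : ℕ) : H K where
  toFun := fun m => if m = n then 1 else 0
  continuous_toFun := continuous_of_discreteTopology
  zero_at_infty' := by
    rw [cocompact_eq_cofinite, Nat.cofinite_eq_atTop]
    refine Filter.Tendsto.congr' ?_ tendsto_const_nhds
    filter_upwards [Filter.eventually_gt_atTop n] with m hm
    simp [Nat.ne_of_gt hm]

/-- The canonical inner product on `H K`: `⟪x, y⟫ = ∑' i, star (x i) * y i`. -/
def inner' (x y : H K) : K := ∑' i, star (x i) * y i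

/-- A bounded operator is of trace class if its matrix entries vanish along the
cofinite filter of `ℕ × ℕ`. -/
def IsTraceClass (T : H K →L[K] H K) : Prop :=
  Tendsto (fun q : ℕ × ℕ => (T (e K q.2)) q.1) Filter.cofinite (nhds 0)

lemma e_apply (n m : ℕ) : (e K n) m = if m = n then 1 else 0 := rfl

lemma apply_norm_le (f : H K) (m : ℕ) : ‖f m‖ ≤ ‖f‖ := by
  rw [← ZeroAtInftyContinuousMap.norm_toBCF_eq_norm]
  exact f.toBCF.norm_coe_le_norm m

lemma norm_le_of_forall (f : H K) {C : ℝ} (hC : 0 ≤ C) (h : ∀ m, ‖f m‖ ≤ C) : ‖f‖ ≤ C := by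
  rw [← ZeroAtInftyContinuousMap.norm_toBCF_eq_norm]
  exact (BoundedContinuousFunction.norm_le hC).2 h

lemma e_norm_le_one (n : ℕ) : ‖e K n‖ ≤ 1 :=
  norm_le_of_forall K _ zero_le_one fun m => by
    rw [e_apply]; split <;> simp

/-- Evaluation at a point as a continuous linear map. -/
def evalCLM (m : ℕ) : H K →L[K] K :=
  LinearMap.mkContinuous
    { toFun := fun f => f m
      map_add' := fun f g => by simp
      map_smul' := fun c f => by simp }
    1 (fun f => by rw [one_mul]; exact apply_norm_le K f m)

@[simp] lemma evalCLM_apply (m : ℕ) (f : H K) : evalCLM K m f = f m := rfl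

lemma trunc_apply (g : ℕ → K) (N m : ℕ) :
    (∑ n ∈ Finset.range N, g n • e K n) m = if m < N then g m else 0 := by
  have h := map_sum (evalCLM K m) (fun n => g n • e K n) (Finset.range N)
  simp only [evalCLM_apply] at h
  rw [h]
  simp only [ZeroAtInftyContinuousMap.smul_apply, e_apply, smul_eq_mul, mul_ite, mul_one, mul_zero]
  rw [Finset.sum_ite_eq (Finset.range N) m g]
  simp [Finset.mem_range]

lemma entry_norm_le (T : H K →L[K] H K) (m n : ℕ) : ‖(T (e K n)) m‖ ≤ ‖T‖ :=
  (apply_norm_le K _ m).trans <| (T.le_opNorm _).trans <| by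
    simpa using mul_le_mul_of_nonneg_left (e_norm_le_one K n) (norm_nonneg T)

lemma row_bdd (T : H K →L[K] H K) (m : ℕ) :
    BddAbove (Set.range fun n => ‖(T (e K n)) m‖) :=
  ⟨‖T‖, by rintro x ⟨n, rfl⟩; exact entry_norm_le K T m n⟩

lemma tendsto_apply_atTop (f : H K) : Tendsto (fun m => f m) atTop (nhds 0) := by
  have h := ZeroAtInftyContinuousMapClass.zero_at_infty (F := H K) f
  rwa [cocompact_eq_cofinite, Nat.cofinite_eq_atTop] at h

lemma trunc_tendsto (x : H K) :
    Tendsto (fun N => ∑ n ∈ Finset.range N, x n • e K n) atTop (nhds x) := by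
  rw [Metric.tendsto_atTop]
  intro ε hε
  obtain ⟨N₀, hN₀⟩ := eventually_atTop.1
    ((NormedAddCommGroup.tendsto_nhds_zero.mp (tendsto_apply_atTop K x)) (ε/2) (half_pos hε))
  refine ⟨N₀, fun N hN => ?_⟩
  rw [dist_eq_norm]
  have hle : ‖(∑ n ∈ Finset.range N, x n • e K n) - x‖ ≤ ε/2 := by
    apply norm_le_of_forall K _ (half_pos hε).le
    intro m
    rw [ZeroAtInftyContinuousMap.sub_apply, trunc_apply]
    by_cases hmN : m < N
    · simp only [if_pos hmN, sub_self, norm_zero]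
      exact (half_pos hε).le
    · simp only [if_neg hmN, zero_sub, norm_neg]
      exact (hN₀ m (hN.trans (not_lt.1 hmN))).le
  exact lt_of_le_of_lt hle (half_lt_self hε)

/-- Compactness criterion: a bounded operator is compact iff the row suprema of its
matrix tend to zero. -/
theorem stmt15 [ProperSpace K] (T : H K →L[K] H K) :
    IsCompactOperator T ↔
      Tendsto (fun m => ⨆ n : ℕ, ‖(T (e K n)) m‖) atTop (nhds 0) := by
  set s : ℕ → ℝ := fun m => ⨆ n : ℕ, ‖(T (e K n)) m‖ with hsdef
  have hs_nonneg : ∀ m, 0 ≤ s m := fun m => Real.iSup_nonneg fun n => norm_nonneg _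
  have hs_leT : ∀ m, s m ≤ ‖T‖ := fun m =>
    Real.iSup_le (fun n => entry_norm_le K T m n) (norm_nonneg T)
  have hle_s : ∀ m n, ‖(T (e K n)) m‖ ≤ s m := fun m n => le_ciSup (row_bdd K T m) n
  constructor
  · rintro ⟨S, hS, hmem⟩
    rw [Metric.tendsto_atTop]
    intro ε hε
    obtain ⟨r, hr, hball⟩ := Metric.mem_nhds_iff.1 hmem
    obtain ⟨c, hc0, hcr⟩ := NormedField.exists_norm_lt K hr
    have hmemS : ∀ n, T (c • e K n) ∈ S := by
      intro n
      apply hball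
      rw [Metric.mem_ball, dist_zero_right]
      have hle1 : ‖c • e K n‖ ≤ ‖c‖ := by
        apply norm_le_of_forall K _ (norm_nonneg c)
        intro m
        rw [ZeroAtInftyContinuousMap.smul_apply, smul_eq_mul, norm_mul, e_apply]
        split <;> simp
      exact lt_of_le_of_lt hle1 hcr
    set δ := ε / 2 * ‖c‖ with hδdef
    have hδpos : 0 < δ := mul_pos (half_pos hε) hc0
    obtain ⟨t, htfin, hcover⟩ := (Metric.totallyBounded_iff.1 hS.totallyBounded) δ hδpos
    have hev : ∀ᶠ m in atTop, ∀ y ∈ t, ‖(y : H K) m‖ < δ := by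
      rw [eventually_all_finite htfin]
      intro y _
      exact (NormedAddCommGroup.tendsto_nhds_zero.mp (tendsto_apply_atTop K y)) δ hδpos
    obtain ⟨N, hN⟩ := eventually_atTop.1 hev
    refine ⟨N, fun m hm => ?_⟩
    rw [Real.dist_0_eq_abs, abs_of_nonneg (hs_nonneg m)]
    have hterm : ∀ n, ‖(T (e K n)) m‖ ≤ ε / 2 := by
      intro n
      obtain ⟨y, hy, hmemball⟩ := Set.mem_iUnion₂.1 (hcover (hmemS n))
      have h1 : ‖T (c • e K n) - y‖ < δ := by
        rwa [Metric.mem_ball, dist_eq_norm] at hmemball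
      have h2 : ‖(y : H K) m‖ < δ := hN m hm y hy
      have h3 : ‖(T (c • e K n)) m‖ < δ := by
        have heq : (T (c • e K n)) m = ((T (c • e K n) - y) m) + y m := by
          rw [ZeroAtInftyContinuousMap.sub_apply]; ring
        rw [heq]
        exact lt_of_le_of_lt (IsUltrametricDist.norm_add_le_max _ _)
          (max_lt (lt_of_le_of_lt (apply_norm_le K _ m) h1) h2)
      have h4 : ‖c‖ * ‖(T (e K n)) m‖ < ε / 2 * ‖c‖ := by
        rw [← norm_mul]
        calc ‖c * (T (e K n)) m‖ = ‖(T (c • e K n)) m‖ := by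
              rw [map_smul, ZeroAtInftyContinuousMap.smul_apply, smul_eq_mul]
          _ < δ := h3
      rw [mul_comm] at h4
      exact le_of_lt ((mul_lt_mul_iff_of_pos_right hc0).1 h4)
    have : s m ≤ ε / 2 := Real.iSup_le hterm (half_pos hε).le
    linarith
  · intro h
    have key : ∀ x : H K, ‖x‖ ≤ 1 → ∀ m, ‖(T x) m‖ ≤ s m := by
      intro x hx m
      have hNbound : ∀ N, ‖(T (∑ n ∈ Finset.range N, x n • e K n)) m‖ ≤ s m := by
        intro N
        have h1 : T (∑ n ∈ Finset.range N, x n • e K n)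
            = ∑ n ∈ Finset.range N, x n • T (e K n) := by
          rw [map_sum]; simp
        rw [h1]
        have h2 := map_sum (evalCLM K m) (fun n => x n • T (e K n)) (Finset.range N)
        simp only [evalCLM_apply] at h2
        rw [h2]
        apply IsUltrametricDist.norm_sum_le_of_forall_le_of_nonneg (hs_nonneg m)
        intro n _
        rw [ZeroAtInftyContinuousMap.smul_apply, smul_eq_mul, norm_mul]
        calc ‖x n‖ * ‖(T (e K n)) m‖ ≤ 1 * s m :=
              mul_le_mul ((apply_norm_le K x n).trans hx) (hle_s m n)
                (norm_nonneg _) zero_le_one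
          _ = s m := one_mul _
      have hlim : Tendsto (fun N => ‖(T (∑ n ∈ Finset.range N, x n • e K n)) m‖)
          atTop (nhds ‖(T x) m‖) := by
        have hc : Continuous fun z : H K => ‖(T z) m‖ :=
          continuous_norm.comp ((evalCLM K m).continuous.comp T.continuous)
        exact (hc.tendsto x).comp (trunc_tendsto K x)
      exact le_of_tendsto hlim (Eventually.of_forall hNbound)
    set C : Set (H K) := {y | ∀ m, ‖y m‖ ≤ s m} with hCdef
    have hC_closed : IsClosed C := by
      have : C = ⋂ m, {y : H K | ‖y m‖ ≤ s m} := by ext y; simp [hCdef, Set.mem_iInter]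
      rw [this]
      exact isClosed_iInter fun m =>
        isClosed_le (continuous_norm.comp (evalCLM K m).continuous) continuous_const
    have hC_tb : TotallyBounded C := by
      rw [Metric.totallyBounded_iff]
      intro ε hε
      obtain ⟨M, hM⟩ := eventually_atTop.1 (h.eventually_lt_const (half_pos hε))
      obtain ⟨F, hFfin, hFcover⟩ := Metric.totallyBounded_iff.1
        (isCompact_closedBall (0:K) ‖T‖).totallyBounded (ε/2) (half_pos hε)
      refine ⟨(fun g : Fin M → K =>
        ∑ n ∈ Finset.range M, (fun k => if hk : k < M then g ⟨k, hk⟩ else 0) n • e K n) ''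
          (Set.univ.pi fun _ => F), ((Set.Finite.pi fun _ => hFfin).image _), ?_⟩
      intro x hx
      have hxm : ∀ m, x m ∈ Metric.closedBall (0:K) ‖T‖ := fun m => by
        rw [Metric.mem_closedBall, dist_zero_right]
        exact (hx m).trans (hs_leT m)
      choose gg hgg1 hgg2 using fun i : Fin M => Set.mem_iUnion₂.1 (hFcover (hxm i))
      set g' : ℕ → K := fun k => if hk : k < M then gg ⟨k, hk⟩ else 0 with hg'def
      refine Set.mem_iUnion₂.2 ⟨∑ n ∈ Finset.range M, g' n • e K n,
        ⟨gg, fun i _ => hgg1 i, rfl⟩, ?_⟩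
      rw [Metric.mem_ball, dist_eq_norm]
      have hle2 : ‖x - ∑ n ∈ Finset.range M, g' n • e K n‖ ≤ ε/2 := by
        apply norm_le_of_forall K _ (half_pos hε).le
        intro m
        rw [ZeroAtInftyContinuousMap.sub_apply, trunc_apply]
        by_cases hmM : m < M
        · simp only [if_pos hmM, hg'def, dif_pos hmM]
          have := hgg2 ⟨m, hmM⟩
          rw [Metric.mem_ball, dist_eq_norm] at this
          exact this.le
        · simp only [if_neg hmM, sub_zero]
          exact ((hx m).trans (hM m (not_lt.1 hmM)).le)
      exact lt_of_le_of_lt hle2 (half_lt_self hε)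
    have hC_compact : IsCompact C := TotallyBounded.isCompact_of_isClosed hC_tb hC_closed
    exact ⟨C, hC_compact, mem_of_superset (Metric.closedBall_mem_nhds 0 one_pos)
      (fun x hx => key x (mem_closedBall_zero_iff.1 hx))⟩
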